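/- Let (X,+) be an Abelian topological group that is Hausdorff. If A ⊆ X is nonempty and compact, then its spectre S(A) is compact. -/

import Mathlib

open Pointwise


/-- The spectre of a set in an Abelian group. -/
def spectre {X : Type*} [AddCommGroup X] (A : Set X) : Set X :=
  {x | ∀ y ∈ A, y + x ∈ A ∨ y - x ∈ A}

theorem stmt_15 {X : Type*} [AddCommGroup X] [TopologicalSpace X]
    [IsTopologicalAddGroup X] [T2Space X]
    (A : Set X) (hne : A.Nonempty) (hA : IsCompact A) :
    IsCompact (spectre A) := by
  obtain ⟨a, ha⟩ := hne
  have hAc : IsClosed A := hA.isClosed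
  have hclosed : IsClosed (spectre A) := by
    have : spectre A = ⋂ y ∈ A, ({x | y + x ∈ A} ∪ {x | y - x ∈ A}) := by
      ext x
      simp [spectre, Set.mem_iInter]
    rw [this]
    refine isClosed_biInter fun y _ => IsClosed.union ?_ ?_
    · exact hAc.preimage (continuous_const.add continuous_id)
    · exact hAc.preimage (continuous_const.sub continuous_id)
  have h1 : IsCompact ((fun y => y - a) '' A) := hA.image (continuous_id.sub continuous_const)
  have h2 : IsCompact ((fun y => a - y) '' A) := hA.image (continuous_const.sub continuous_id)
  have hsub : spectre A ⊆ ((fun y => y - a) '' A) ∪ ((fun y => a - y) '' A) := by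
    intro x hx
    rcases hx a ha with h | h
    · exact Or.inl ⟨a + x, h, by simp⟩
    · exact Or.inr ⟨a - x, h, by simp⟩
  exact (h1.union h2).of_isClosed_subset hclosed hsub
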